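/- Let f be α-strongly convex and β-smooth over the spectrahedron S_d w.r.t. the Frobenius norm, with minimizer X*. Let X_t ∈ S_d, η_t ∈ [0,1], and define V_t = argmin_{V∈S_d} V·∇f(X_t) + (η_t β/2)‖V - X_t‖_F² and X_{t+1} = X_t + η_t(V_t - X_t). Then, writing h_t = f(X_t) - f(X*), it holds that h_{t+1} ≤ (1 - η_t + η_t²β/α)·h_t. -/

import Mathlib

open Matrix BigOperators

noncomputable def frobNorm {d : ℕ} (A : Matrix (Fin d) (Fin d) ℝ) : ℝ :=
  Real.sqrt (∑ i, ∑ j, (A i j) ^ 2)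

noncomputable def vnorm {d : ℕ} (v : Fin d → ℝ) : ℝ :=
  Real.sqrt (∑ i, (v i) ^ 2)

def dotp {d : ℕ} (A B : Matrix (Fin d) (Fin d) ℝ) : ℝ :=
  ∑ i, ∑ j, A i j * B i j

def quadForm {d : ℕ} (A : Matrix (Fin d) (Fin d) ℝ) (v : Fin d → ℝ) : ℝ :=
  ∑ i, ∑ j, v i * A i j * v j

/-- The spectrahedron: real symmetric PSD matrices with unit trace. -/
def Spectra (d : ℕ) : Set (Matrix (Fin d) (Fin d) ℝ) :=
  {X | X.PosSemidef ∧ X.trace = 1}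

/-- Projection onto the span of eigenvectors of `Y` whose eigenvalues have magnitude ≥ τ. -/
noncomputable def specProj {d : ℕ} {Y : Matrix (Fin d) (Fin d) ℝ}
    (hY : Y.IsHermitian) (τ : ℝ) : Matrix (Fin d) (Fin d) ℝ :=
  ∑ j : Fin d, if τ ≤ |hY.eigenvalues j| then
    Matrix.vecMulVec (fun i => hY.eigenvectorBasis j i) (fun i => hY.eigenvectorBasis j i)
  else 0

lemma frob_sq {d : ℕ} (A : Matrix (Fin d) (Fin d) ℝ) :
    frobNorm A ^ 2 = ∑ i, ∑ j, (A i j) ^ 2 := by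
  rw [frobNorm, Real.sq_sqrt]
  positivity

lemma frob_sq_nonneg {d : ℕ} (A : Matrix (Fin d) (Fin d) ℝ) : 0 ≤ frobNorm A ^ 2 := by
  rw [frob_sq]; positivity

lemma frob_sq_smul {d : ℕ} (t : ℝ) (A : Matrix (Fin d) (Fin d) ℝ) :
    frobNorm (t • A) ^ 2 = t ^ 2 * frobNorm A ^ 2 := by
  simp only [frob_sq, Matrix.smul_apply, smul_eq_mul, mul_pow, Finset.mul_sum]

lemma frob_sq_comm {d : ℕ} (A B : Matrix (Fin d) (Fin d) ℝ) :
    frobNorm (A - B) ^ 2 = frobNorm (B - A) ^ 2 := by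
  simp only [frob_sq, Matrix.sub_apply]
  congr 1; ext i; congr 1; ext j; ring

lemma dotp_sub_right {d : ℕ} (A B C : Matrix (Fin d) (Fin d) ℝ) :
    dotp A (B - C) = dotp A B - dotp A C := by
  simp only [dotp, Matrix.sub_apply, mul_sub, Finset.sum_sub_distrib]

lemma dotp_smul_right {d : ℕ} (A : Matrix (Fin d) (Fin d) ℝ) (t : ℝ) (B : Matrix (Fin d) (Fin d) ℝ) :
    dotp A (t • B) = t * dotp A B := by
  simp only [dotp, Matrix.smul_apply, smul_eq_mul, Finset.mul_sum]
  congr 1; ext i; congr 1; ext j; ring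

lemma psd_smul {d : ℕ} {M : Matrix (Fin d) (Fin d) ℝ} (hM : M.PosSemidef) {t : ℝ}
    (ht : 0 ≤ t) : (t • M).PosSemidef := by
  constructor
  · have h1 := hM.1
    rw [Matrix.IsHermitian] at h1 ⊢
    rw [Matrix.conjTranspose_smul, h1, star_trivial]
  · intro x
    have h0 := hM.2 x
    have key : (x.sum fun i xi => x.sum fun j xj => star xi * (t • M) i j * xj)
        = t * (x.sum fun i xi => x.sum fun j xj => star xi * M i j * xj) := by
      simp only [Finsupp.sum, Finset.mul_sum, Matrix.smul_apply, smul_eq_mul]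
      exact Finset.sum_congr rfl fun i _ => Finset.sum_congr rfl fun j _ => by ring
    rw [key]
    exact mul_nonneg ht h0

set_option maxHeartbeats 1000000

theorem stmt11 {d : ℕ} (α β : ℝ) (hα : 0 < α) (hβ : 0 < β)
    (f : Matrix (Fin d) (Fin d) ℝ → ℝ)
    (g : Matrix (Fin d) (Fin d) ℝ → Matrix (Fin d) (Fin d) ℝ)
    (hsc : ∀ A B, f A + dotp (g A) (B - A) + α / 2 * (frobNorm (A - B)) ^ 2 ≤ f B)
    (hsmooth : ∀ A B, f B ≤ f A + dotp (g A) (B - A) + β / 2 * (frobNorm (B - A)) ^ 2)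
    (Xt Xs : Matrix (Fin d) (Fin d) ℝ)
    (hXt : Xt ∈ Spectra d) (hXs : Xs ∈ Spectra d)
    (hmin : ∀ Z ∈ Spectra d, f Xs ≤ f Z)
    (η : ℝ) (hη : η ∈ Set.Icc (0:ℝ) 1)
    (Vt : Matrix (Fin d) (Fin d) ℝ) (hVt : Vt ∈ Spectra d)
    (hVopt : ∀ V ∈ Spectra d,
      dotp (g Xt) Vt + η * β / 2 * (frobNorm (Vt - Xt)) ^ 2
        ≤ dotp (g Xt) V + η * β / 2 * (frobNorm (V - Xt)) ^ 2) :
    f (Xt + η • (Vt - Xt)) - f Xs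
      ≤ (1 - η + η ^ 2 * β / α) * (f Xt - f Xs) := by
  obtain ⟨hη0, hη1⟩ := hη
  set D : ℝ := frobNorm (Xs - Xt) ^ 2 with hDdef
  have hD0 : 0 ≤ D := frob_sq_nonneg _
  have hh0 : 0 ≤ f Xt - f Xs := sub_nonneg.2 (hmin Xt hXt)
  -- convexity of Spectra
  have hZmem : ∀ t : ℝ, 0 ≤ t → t ≤ 1 → Xs + t • (Xt - Xs) ∈ Spectra d := by
    intro t ht0 ht1
    have heq : Xs + t • (Xt - Xs) = (1 - t) • Xs + t • Xt := by
      ext i j; simp [Matrix.add_apply, Matrix.smul_apply, Matrix.sub_apply]; ring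
    constructor
    · rw [heq]
      exact (psd_smul hXs.1 (by linarith)).add (psd_smul hXt.1 ht0)
    · rw [heq]
      simp only [Matrix.trace_add, Matrix.trace_smul, hXs.2, hXt.2, smul_eq_mul]
      ring
  -- first-order optimality at Xs
  set c : ℝ := dotp (g Xs) (Xt - Xs) with hcdef
  have hkey : ∀ t : ℝ, 0 < t → t ≤ 1 → 0 ≤ t * c + β / 2 * t ^ 2 * D := by
    intro t ht0 ht1
    have hmem := hZmem t ht0.le ht1
    have h1 := hmin _ hmem
    have h2 := hsmooth Xs (Xs + t • (Xt - Xs))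
    have e1 : Xs + t • (Xt - Xs) - Xs = t • (Xt - Xs) := by
      ext i j; simp [Matrix.add_apply, Matrix.smul_apply, Matrix.sub_apply]
    rw [e1, dotp_smul_right, frob_sq_smul] at h2
    have e2 : frobNorm (Xt - Xs) ^ 2 = D := frob_sq_comm _ _
    rw [e2] at h2
    nlinarith [h1, h2]
  have hc0 : 0 ≤ c := by
    by_contra hc
    push_neg at hc
    rcases eq_or_lt_of_le hD0 with hD | hD
    · have := hkey 1 one_pos le_rfl
      nlinarith
    · set t : ℝ := min 1 (-c / (β * D)) with htdef
      have htpos : 0 < t := lt_min one_pos (div_pos (neg_pos.2 hc) (by positivity))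
      have ht1 : t ≤ 1 := min_le_left _ _
      have ht2 : t ≤ -c / (β * D) := min_le_right _ _
      have := hkey t htpos ht1
      have h3 : t * (β * D) ≤ -c := by
        rw [← le_div_iff₀ (by positivity)] at *
        exact ht2
      nlinarith
  -- D bound: α D ≤ 2 (f Xt - f Xs)
  have hDbound : α * D ≤ 2 * (f Xt - f Xs) := by
    have := hsc Xs Xt
    rw [← hcdef] at this
    have : α / 2 * D ≤ f Xt - f Xs - c := by
      have e := frob_sq_comm Xs Xt
      nlinarith [hsc Xs Xt]
    nlinarith
  -- smoothness step
  have hs := hsmooth Xt (Xt + η • (Vt - Xt))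
  have e3 : Xt + η • (Vt - Xt) - Xt = η • (Vt - Xt) := by
    ext i j; simp [Matrix.add_apply, Matrix.smul_apply, Matrix.sub_apply]
  rw [e3, dotp_smul_right, frob_sq_smul] at hs
  -- Vt optimality with V = Xs
  have hv := hVopt Xs hXs
  have e4 : dotp (g Xt) Vt = dotp (g Xt) (Vt - Xt) + dotp (g Xt) Xt := by
    rw [dotp_sub_right]; ring
  have e5 : dotp (g Xt) Xs = dotp (g Xt) (Xs - Xt) + dotp (g Xt) Xt := by
    rw [dotp_sub_right]; ring
  rw [e4, e5] at hv
  -- strong convexity at Xt towards Xs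
  have hsc2 := hsc Xt Xs
  have e6 : frobNorm (Xt - Xs) ^ 2 = D := frob_sq_comm _ _
  rw [e6] at hsc2
  -- combine
  have hVnn : 0 ≤ frobNorm (Vt - Xt) ^ 2 := frob_sq_nonneg _
  rw [← hDdef] at hv
  have hηmul : η * dotp (g Xt) (Vt - Xt) + η ^ 2 * β / 2 * frobNorm (Vt - Xt) ^ 2
      ≤ η * dotp (g Xt) (Xs - Xt) + η ^ 2 * β / 2 * D := by
    nlinarith [mul_le_mul_of_nonneg_left hv hη0]
  have A2 : η * dotp (g Xt) (Xs - Xt) ≤ η * (f Xs - f Xt - α / 2 * D) :=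
    mul_le_mul_of_nonneg_left (by linarith [hsc2]) hη0
  have A3 : f (Xt + η • (Vt - Xt)) ≤ f Xt + η * (f Xs - f Xt)
      - η * (α / 2 * D) + η ^ 2 * β / 2 * D := by nlinarith [hs, hηmul, A2]
  -- final arithmetic; multiply goal by α
  have final : α * (f (Xt + η • (Vt - Xt)) - f Xs)
      ≤ α * ((1 - η + η ^ 2 * β / α) * (f Xt - f Xs)) := by
    have hrw : α * ((1 - η + η ^ 2 * β / α) * (f Xt - f Xs))
        = (α - η * α + η ^ 2 * β) * (f Xt - f Xs) := by
      have hdiv : α * (η ^ 2 * β / α) = η ^ 2 * β := by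
        field_simp
      linear_combination (f Xt - f Xs) * hdiv
    rw [hrw]
    nlinarith [mul_le_mul_of_nonneg_left A3 hα.le,
      mul_le_mul_of_nonneg_left hDbound (by positivity : (0:ℝ) ≤ η ^ 2 * β / 2),
      mul_nonneg (mul_nonneg (mul_nonneg hη0 hα.le) hα.le) hD0,
      mul_nonneg hη0 hh0]
  exact le_of_mul_le_mul_left final hα
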